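/- The squared pseudo-hyperbolic distance ψ(λ,μ) = |(λ − μ)/(1 − conj(μ)λ)|² on the open unit disk 𝔻 is conditionally negative definite: for all n, all λ_1,…,λ_n ∈ 𝔻 and all c_1,…,c_n ∈ ℂ with ∑_j c_j = 0, one has ∑_{i,j} conj(c_i) c_j ψ(λ_i, λ_j) ≤ 0. -/

import Mathlib

open scoped ComplexOrder ComplexConjugate

/-- The squared pseudo-hyperbolic distance on the open unit disk. -/
noncomputable def pseudoHypDistSq (l m : ℂ) : ℝ :=
  ‖(l - m) / (1 - conj m * l)‖ ^ 2

/-- The squared pseudo-hyperbolic distance is conditionally negative definite on the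
open unit disk: for points `λᵢ ∈ 𝔻` and scalars `cᵢ` with `∑ cᵢ = 0`, the quadratic
form is `≤ 0`. -/
theorem pseudoHypDistSq_condNegDef
    (n : ℕ) (l : Fin n → ℂ) (hl : ∀ i, ‖l i‖ < 1)
    (c : Fin n → ℂ) (hc : ∑ j, c j = 0) :
    ∑ i, ∑ j, conj (c i) * c j * (pseudoHypDistSq (l i) (l j) : ℂ) ≤ 0 := by
  set w : Fin n → ℂ := fun i => (1 - l i * conj (l i)) * c i with hw
  set v : ℕ × ℕ → Fin n → ℂ := fun p i => w i * conj (l i) ^ p.1 * (l i) ^ p.2 with hv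
  have habs : ∀ i j : Fin n, ‖l j‖ * ‖l i‖ < 1 := by
    intro i j
    nlinarith [hl i, hl j, norm_nonneg (l i), norm_nonneg (l j)]
  have hD : ∀ i j : Fin n, (1 - conj (l j) * l i) ≠ 0 := by
    intro i j h
    have h1 : conj (l j) * l i = 1 := by linear_combination -h
    have h2 := congrArg (‖·‖) h1
    rw [norm_mul, norm_one, Complex.norm_conj] at h2
    exact absurd h2 (ne_of_lt (habs i j))
  have hn1 : ∀ i j : Fin n, ‖conj (l j) * l i‖ < 1 := by
    intro i j
    rw [norm_mul, Complex.norm_conj]; exact habs i j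
  have hn2 : ∀ i j : Fin n, ‖l j * conj (l i)‖ < 1 := by
    intro i j
    rw [norm_mul, Complex.norm_conj]
    rw [mul_comm]; exact habs j i
  have hg1 : ∀ i j : Fin n, Summable fun k : ℕ => ‖(conj (l j) * l i) ^ k‖ := by
    intro i j
    simp only [norm_pow]
    exact summable_geometric_of_lt_one (norm_nonneg _) (hn1 i j)
  have hg2 : ∀ i j : Fin n, Summable fun k : ℕ => ‖(l j * conj (l i)) ^ k‖ := by
    intro i j
    simp only [norm_pow]
    exact summable_geometric_of_lt_one (norm_nonneg _) (hn2 i j)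
  have hfg : ∀ i j : Fin n, ∀ p : ℕ × ℕ, conj (v p i) * v p j =
      (conj (w i) * w j) * ((conj (l j) * l i) ^ p.1 * (l j * conj (l i)) ^ p.2) := by
    intro i j p
    simp only [hv, map_mul, map_pow, Complex.conj_conj]
    ring
  have hsum : ∀ i j : Fin n, Summable fun p : ℕ × ℕ => conj (v p i) * v p j := by
    intro i j
    have := (summable_mul_of_summable_norm (hg1 i j) (hg2 i j)).mul_left (conj (w i) * w j)
    apply this.congr
    intro p
    exact (hfg i j p).symm
  -- the key per-pair identity
  have key : ∀ i j : Fin n,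
      conj (c i) * c j * (pseudoHypDistSq (l i) (l j) : ℂ) =
        conj (c i) * c j - ∑' p : ℕ × ℕ, conj (v p i) * v p j := by
    intro i j
    have hDj := hD i j
    have hDj' : (1 - l j * conj (l i)) ≠ 0 := by
      intro h
      apply hDj
      have h2 := congrArg conj h
      simpa [map_sub, map_mul, map_one, Complex.conj_conj, mul_comm] using h2
    have htsum : (∑' p : ℕ × ℕ, conj (v p i) * v p j) =
        (conj (w i) * w j) * ((1 - conj (l j) * l i)⁻¹ * (1 - l j * conj (l i))⁻¹) := by
      have hprod := tsum_mul_tsum_of_summable_norm (hg1 i j) (hg2 i j)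
      have e1 : (∑' k : ℕ, (conj (l j) * l i) ^ k) = (1 - conj (l j) * l i)⁻¹ :=
        tsum_geometric_of_norm_lt_one (hn1 i j)
      have e2 : (∑' k : ℕ, (l j * conj (l i)) ^ k) = (1 - l j * conj (l i))⁻¹ :=
        tsum_geometric_of_norm_lt_one (hn2 i j)
      calc (∑' p : ℕ × ℕ, conj (v p i) * v p j)
          = ∑' p : ℕ × ℕ, (conj (w i) * w j) *
              ((conj (l j) * l i) ^ p.1 * (l j * conj (l i)) ^ p.2) := tsum_congr (hfg i j)
        _ = (conj (w i) * w j) * ∑' p : ℕ × ℕ,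
              ((conj (l j) * l i) ^ p.1 * (l j * conj (l i)) ^ p.2) := tsum_mul_left
        _ = _ := by rw [← hprod, e1, e2]
    rw [htsum]
    have hz : (pseudoHypDistSq (l i) (l j) : ℂ) =
        ((l i - l j) / (1 - conj (l j) * l i)) *
          conj ((l i - l j) / (1 - conj (l j) * l i)) := by
      rw [pseudoHypDistSq, Complex.sq_norm, ← Complex.mul_conj]
    rw [hz]
    have hcw : conj (w i) = (1 - conj (l i) * l i) * conj (c i) := by
      simp [hw, map_mul, map_sub, map_one, Complex.conj_conj]
    rw [hcw]
    simp only [hw, map_div₀, map_sub, map_mul, map_one, Complex.conj_conj]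
    have hDj'' : (1 - l i * conj (l j)) ≠ 0 := by rw [mul_comm]; exact hDj
    field_simp
    ring
  -- assemble
  have step : ∑ i, ∑ j, conj (c i) * c j * (pseudoHypDistSq (l i) (l j) : ℂ)
      = (∑ i, ∑ j, conj (c i) * c j)
        - ∑' p : ℕ × ℕ, (conj (∑ i, v p i) * (∑ j, v p j)) := by
    have e1 : ∀ p : ℕ × ℕ, conj (∑ i, v p i) * (∑ j, v p j)
        = ∑ i, ∑ j, conj (v p i) * v p j := by
      intro p
      rw [map_sum, Finset.sum_mul_sum]
    rw [tsum_congr e1]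
    rw [Summable.tsum_finsetSum (fun i _ => by
      exact summable_sum (fun j _ => hsum i j))]
    rw [← Finset.sum_sub_distrib]
    refine Finset.sum_congr rfl fun i _ => ?_
    rw [Summable.tsum_finsetSum (fun j _ => hsum i j), ← Finset.sum_sub_distrib]
    exact Finset.sum_congr rfl fun j _ => key i j
  rw [step]
  have hzero : (∑ i, ∑ j, conj (c i) * c j) = 0 := by
    simp only [← Finset.sum_mul, ← Finset.mul_sum, ← map_sum, hc, map_zero, zero_mul]
  rw [hzero, zero_sub]
  have e2 : ∀ p : ℕ × ℕ, conj (∑ i, v p i) * (∑ j, v p j)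
      = ((Complex.normSq (∑ i, v p i) : ℝ) : ℂ) := by
    intro p
    rw [mul_comm, Complex.mul_conj]
  rw [tsum_congr e2, ← Complex.ofReal_tsum]
  rw [neg_nonpos]
  rw [Complex.zero_le_real]
  exact tsum_nonneg fun p => Complex.normSq_nonneg _
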